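/- For every k ≥ 1 and n ≥ 0, the cardinality of M(n,k,p) := { u ∈ ℕ^n : 1 ≤ u_i ≤ (p-1)(i-1)+k for all i, and u is weakly increasing } equals (k/((p-1)n+k)) · binom(pn + k - 1, n). -/

import Mathlib

/-- p-ary bracketings: terms over one variable `x` with one p-ary operation symbol `ω`. -/
inductive Brack (p : ℕ) : Type
  | x : Brack p
  | node : (Fin p → Brack p) → Brack p

namespace Brack

/-- occurrence number: number of occurrences of ω -/
def occ {p : ℕ} : Brack p → ℕ
  | .x => 0
  | .node f => 1 + ∑ i, occ (f i)

/-- length: number of occurrences of x -/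
def len {p : ℕ} : Brack p → ℕ
  | .x => 1
  | .node f => ∑ i, len (f i)

/-- evaluation of a bracketing in a groupoid, variables enumerated left-to-right
starting at position `j`. -/
def evalFrom {p : ℕ} {A : Type*} (op : (Fin p → A) → A) (v : ℕ → A) :
    Brack p → ℕ → A
  | .x, j => v j
  | .node f, j =>
      op (fun i => evalFrom op v (f i)
        (j + ∑ k ∈ Finset.univ.filter (· < i), len (f k)))

/-- the term function induced by a bracketing -/
def eval {p : ℕ} {A : Type*} (op : (Fin p → A) → A) (t : Brack p) (v : ℕ → A) : A :=
  evalFrom op v t 0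

/-- prefix word of a bracketing: `true` codes ω, `false` codes x -/
def word {p : ℕ} : Brack p → List Bool
  | .x => [false]
  | .node f => true :: (List.ofFn (fun i => word (f i))).flatten

/-- auxiliary: scan a word, recording 1 + number of x's before each ω -/
def STaux : List Bool → ℕ → List ℕ
  | [], _ => []
  | true :: w, c => (c + 1) :: STaux w c
  | false :: w, c => STaux w (c + 1)

/-- insertion tuple of a bracketing: the i-th entry is one plus the number
of x's preceding the i-th occurrence of ω in the prefix notation -/
def ST {p : ℕ} (t : Brack p) : List ℕ := STaux (word t) 0

/-- replace the i-th (0-based) occurrence of x in `t` by `s` -/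
def replaceLeaf {p : ℕ} : Brack p → ℕ → Brack p → Brack p
  | .x, i, s => if i = 0 then s else .x
  | .node f, i, s => .node (fun j =>
      let off := ∑ k ∈ Finset.univ.filter (· < j), len (f k)
      if off ≤ i ∧ i < off + len (f j) then replaceLeaf (f j) (i - off) s else f j)

/-- β_i : insertion of ω x … x at the i-th (1-based) occurrence of x -/
def beta {p : ℕ} (i : ℕ) (t : Brack p) : Brack p :=
  replaceLeaf t (i - 1) (.node (fun _ => .x))

/-- left depth: depth of leftmost leaf (binary case) -/
def dl : Brack 2 → ℕ
  | .x => 0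
  | .node f => dl (f 0) + 1

/-- right depth: depth of rightmost leaf (binary case) -/
def dr : Brack 2 → ℕ
  | .x => 0
  | .node f => dr (f 1) + 1

/-- left factor of a binary bracketing -/
def leftF : Brack 2 → Brack 2
  | .x => .x
  | .node f => f 0

/-- whether a bracketing is the single variable x -/
def isX {p : ℕ} : Brack p → Bool
  | .x => true
  | .node _ => false

/-- number of pairs of eggs, i.e. subterm occurrences of ω x x (binary case) -/
def eggs : Brack 2 → ℕ
  | .x => 0
  | .node f => (if isX (f 0) && isX (f 1) then 1 else 0) + eggs (f 0) + eggs (f 1)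

end Brack

/-- generalized Catalan numbers -/
def genCat (p : ℕ) : ℕ → ℕ
  | 0 => 1
  | n + 1 =>
      ∑ v ∈ (Finset.Nat.antidiagonalTuple p n).attach, ∏ k : Fin p, genCat p (v.1 k)
  decreasing_by
    have hv := Finset.Nat.mem_antidiagonalTuple.mp v.2
    have hle : v.1 k ≤ n := by
      calc v.1 k ≤ ∑ i, v.1 i :=
            Finset.single_le_sum (fun i _ => Nat.zero_le _) (Finset.mem_univ k)
        _ = n := hv
    omega

/-- the set M(n,k,p) of weakly increasing n-tuples of positive integers
with u_i ≤ (p-1)(i-1)+k (here indices are 0-based) -/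
def Mset (n k p : ℕ) : Set (Fin n → ℕ) :=
  {u | (∀ i : Fin n, 1 ≤ u i ∧ u i ≤ (p - 1) * (i : ℕ) + k) ∧
    ∀ i j : Fin n, i ≤ j → u i ≤ u j}


def MFin (p n k : ℕ) : Finset (Fin n → ℕ) :=
  (Fintype.piFinset fun i : Fin n => Finset.Icc 1 ((p - 1) * (i : ℕ) + k)).filter
    (fun u => ∀ i j : Fin n, i ≤ j → u i ≤ u j)

lemma mem_MFin {p n k : ℕ} {u : Fin n → ℕ} :
    u ∈ MFin p n k ↔ (∀ i : Fin n, 1 ≤ u i ∧ u i ≤ (p - 1) * (i : ℕ) + k) ∧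
      ∀ i j : Fin n, i ≤ j → u i ≤ u j := by
  simp [MFin, Fintype.mem_piFinset, Finset.mem_Icc, Finset.mem_filter, forall_and]

lemma MFin_zero (p k : ℕ) : (MFin p 0 k).card = 1 := by
  rw [Finset.card_eq_one]
  refine ⟨finZeroElim, ?_⟩
  ext u
  simp [mem_MFin, Finset.mem_singleton]
  exact funext fun i => i.elim0

lemma MFin_k_zero (p n : ℕ) : (MFin p (n + 1) 0).card = 0 := by
  rw [Finset.card_eq_zero]
  ext u
  simp only [mem_MFin, Finset.notMem_empty, iff_false]
  rintro ⟨h1, -⟩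
  have := h1 0
  simp at this
  omega

lemma MFin_rec (p n k : ℕ) (hp : 1 ≤ p) :
    (MFin p (n + 1) (k + 1)).card =
      (MFin p n (k + p)).card + (MFin p (n + 1) k).card := by
  rw [← Finset.card_filter_add_card_filter_not
    (p := fun u : Fin (n + 1) → ℕ => u 0 = 1) (s := MFin p (n + 1) (k + 1))]
  have hpp : ∀ i : ℕ, (p - 1) * (i + 1) + (k + 1) = (p - 1) * i + (k + p) := by
    intro i
    cases p with
    | zero => omega
    | succ q => simp [Nat.mul_add]; omega
  congr 1
  · -- u 0 = 1 part ↔ MFin p n (k+p)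
    refine Finset.card_bij' (fun u _ => u ∘ Fin.succ) (fun v _ => Fin.cases 1 v)
      ?_ ?_ ?_ ?_
    · intro u hu
      simp only [Finset.mem_filter, mem_MFin] at hu
      obtain ⟨⟨hb, hm⟩, hu0⟩ := hu
      simp only [mem_MFin]
      refine ⟨fun i => ?_, fun i j hij => hm i.succ j.succ (by simpa using hij)⟩
      have h1 := (hb i.succ).1
      have h2 := (hb i.succ).2
      simp only [Function.comp_apply, Fin.val_succ] at h1 h2 ⊢
      rw [hpp i] at h2
      exact ⟨h1, h2⟩
    · intro v hv
      simp only [mem_MFin] at hv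
      obtain ⟨hb, hm⟩ := hv
      simp only [Finset.mem_filter, mem_MFin]
      refine ⟨⟨fun i => ?_, fun i j hij => ?_⟩, by simp⟩
      · refine Fin.cases ?_ (fun i' => ?_) i
        · simp
        · have h1 := (hb i').1
          have h2 := (hb i').2
          simp only [Fin.cases_succ, Fin.val_succ]
          rw [hpp i']
          exact ⟨h1, h2⟩
      · have hval : ∀ x : Fin (n + 1), 1 ≤ Fin.cases (motive := fun _ => ℕ) 1 v x :=
          fun x => Fin.cases (le_refl 1) (fun x' => by simpa using (hb x').1) x
        rcases Fin.eq_zero_or_eq_succ i with rfl | ⟨i', rfl⟩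
        · simpa using hval j
        · rcases Fin.eq_zero_or_eq_succ j with rfl | ⟨j', rfl⟩
          · exact absurd hij (by rw [Fin.le_def]; simp)
          · simpa using hm i' j' (Fin.succ_le_succ_iff.mp hij)
    · intro u hu
      simp only [Finset.mem_filter] at hu
      funext i
      refine Fin.cases ?_ (fun i' => ?_) i
      · simpa using hu.2.symm
      · simp
    · intro v hv
      funext i
      simp
  · -- u 0 ≠ 1 part ↔ MFin p (n+1) k
    refine Finset.card_bij' (fun u _ => fun x => u x - 1) (fun v _ => fun x => v x + 1)
      ?_ ?_ ?_ ?_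
    · intro u hu
      simp only [Finset.mem_filter, mem_MFin] at hu
      obtain ⟨⟨hb, hm⟩, hu0⟩ := hu
      have h02 : 2 ≤ u 0 := by have := (hb 0).1; omega
      simp only [mem_MFin]
      refine ⟨fun i => ?_, fun i j hij => ?_⟩
      · have h1 := hb i
        have h2 : u 0 ≤ u i := hm 0 i (by simp [Fin.le_def])
        omega
      · have := hm i j hij
        omega
    · intro v hv
      simp only [mem_MFin] at hv
      obtain ⟨hb, hm⟩ := hv
      simp only [Finset.mem_filter, mem_MFin]
      refine ⟨⟨fun i => ?_, fun i j hij => ?_⟩, ?_⟩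
      · have := hb i; omega
      · have := hm i j hij; omega
      · have := (hb 0).1; omega
    · intro u hu
      simp only [Finset.mem_filter, mem_MFin] at hu
      funext x
      have h1 := (hu.1.1 x).1
      show u x - 1 + 1 = u x
      omega
    · intro v hv
      funext x
      simp

lemma key (q : ℕ) : ∀ n k : ℕ,
    (MFin (q + 2) n k).card * ((q + 1) * n + k) = k * Nat.choose ((q + 2) * n + k - 1) n := by
  intro n
  induction n with
  | zero =>
    intro k
    simp [MFin_zero]
  | succ n ih =>
    intro k
    induction k with
    | zero => simp [MFin_k_zero]
    | succ k ihk =>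
      rw [MFin_rec (q + 2) n k (by omega)]
      have ha := ih (k + (q + 2))
      set a := (MFin (q + 2) n (k + (q + 2))).card with ha_def
      set b := (MFin (q + 2) (n + 1) k).card with hb_def
      set m := (q + 2) * n + q + k + 1 with hm_def
      have hm1 : (q + 2) * n + (k + (q + 2)) - 1 = m := by omega
      have hm2 : (q + 2) * (n + 1) + k - 1 = m := by rw [hm_def, Nat.mul_succ]; omega
      have hm3 : (q + 2) * (n + 1) + (k + 1) - 1 = m + 1 := by rw [hm_def, Nat.mul_succ]; omega
      rw [hm1] at ha
      rw [hm2] at ihk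
      rw [hm3, Nat.choose_succ_succ]
      set C1 := Nat.choose m n with hC1
      set C2 := Nat.choose m (n + 1) with hC2
      have hkey : C2 * (n + 1) = C1 * ((q + 1) * (n + 1) + k) := by
        have h := Nat.choose_succ_right_eq m n
        have : m - n = (q + 1) * (n + 1) + k := by
          have : n ≤ m := by nlinarith
          simp only [hm_def, Nat.add_mul, Nat.mul_add]
          omega
        rw [this] at h
        exact h
      have hD : a * ((q + 1) * (n + 1) + (k + 1)) = (k + (q + 2)) * C1 := by
        have : (q + 1) * n + (k + (q + 2)) = (q + 1) * (n + 1) + (k + 1) := by ring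
        rw [← this]; exact ha
      have hD' : b * ((q + 1) * (n + 1) + k) = k * C2 := ihk
      have hpos : 0 < (q + 1) * (n + 1) + k := by positivity
      apply Nat.eq_of_mul_eq_mul_right hpos
      zify at hD hD' hkey ⊢
      linear_combination (((q : ℤ) + 1) * ((n : ℤ) + 1) + k) * hD +
        (((q : ℤ) + 1) * ((n : ℤ) + 1) + (k + 1)) * hD' - ((q : ℤ) + 1) * hkey

theorem stmt_4 (p : ℕ) (hp : 2 ≤ p) (k n : ℕ) (hk : 1 ≤ k) :
    Nat.card (Mset n k p) * ((p - 1) * n + k) = k * Nat.choose (p * n + k - 1) n := by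
  obtain ⟨q, rfl⟩ := Nat.exists_eq_add_of_le hp
  have hset : Mset n k (2 + q) = ↑(MFin (2 + q) n k) := by
    ext u
    simp only [Mset, Set.mem_setOf_eq, Finset.mem_coe, mem_MFin]
  have hcard : Nat.card (Mset n k (2 + q)) = (MFin (2 + q) n k).card := by
    rw [hset, Nat.card_coe_set_eq, Set.ncard_coe_finset]
  rw [hcard]
  have h := key q n k
  have e1 : 2 + q = q + 2 := by omega
  rw [e1]
  have e2 : (q + 2 - 1) = q + 1 := by omega
  rw [e2]
  exact h
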